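/- arXiv:2008.02252 — 4 statements merged into one kernel-verified Lean document; each statement's English description precedes it below -/
import Mathlib

section
/- Let X, Y be real d × d symmetric matrices with Tr(X²) = Tr(Y²) = 1. Then Tr([X,Y]ᵀ [X,Y]) ≤ 2, where [X,Y] = XY − YX denotes the matrix commutator. Consequently, 2 Tr(X²Y²) − 2 Tr((XY)²) ≤ 2. -/
open Matrix Finset

section
variable {d : ℕ}

lemma sum_aux {d : ℕ} (a : Fin d → ℝ) (z : Fin d → Fin d → ℝ)
    (ha : ∑ i, a i ^ 2 = 1) (hz : ∑ i, ∑ j, z i j ^ 2 = 1) :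
    ∑ i, ∑ j, ((a i - a j) * z i j) ^ 2 ≤ 2 := by
  have key : ∀ i j, ((a i - a j) * z i j) ^ 2 ≤ 2 * z i j ^ 2 := by
    intro i j
    rcases eq_or_ne i j with h | h
    · subst h; simp [sub_self]; positivity
    · have hpair : a i ^ 2 + a j ^ 2 ≤ 1 := by
        calc a i ^ 2 + a j ^ 2 = ∑ k ∈ ({i, j} : Finset (Fin d)), a k ^ 2 :=
              (Finset.sum_pair (f := fun k => a k ^ 2) h).symm
          _ ≤ ∑ k, a k ^ 2 :=
              Finset.sum_le_sum_of_subset_of_nonneg (Finset.subset_univ _)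
                (fun k _ _ => sq_nonneg _)
          _ = 1 := ha
      nlinarith [sq_nonneg ((a i + a j) * z i j), sq_nonneg (z i j), sq_nonneg (a i - a j),
        mul_le_mul_of_nonneg_right hpair (sq_nonneg (z i j))]
  calc ∑ i, ∑ j, ((a i - a j) * z i j) ^ 2
      ≤ ∑ i, ∑ j, 2 * z i j ^ 2 :=
        Finset.sum_le_sum fun i _ => Finset.sum_le_sum fun j _ => key i j
    _ = 2 := by
        simp only [← Finset.mul_sum]
        rw [hz, mul_one]

lemma comm_bound (X Y : Matrix (Fin d) (Fin d) ℝ)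
    (hX : X.IsSymm) (hY : Y.IsSymm)
    (hX2 : (X * X).trace = 1) (hY2 : (Y * Y).trace = 1) :
    ((X * Y - Y * X)ᵀ * (X * Y - Y * X)).trace ≤ 2 := by
  have hXh : X.IsHermitian := by
    rw [Matrix.IsHermitian, Matrix.conjTranspose_eq_transpose_of_trivial]; exact hX
  set U : Matrix (Fin d) (Fin d) ℝ := (hXh.eigenvectorUnitary : Matrix (Fin d) (Fin d) ℝ)
    with hUdef
  set a : Fin d → ℝ := hXh.eigenvalues with hadef
  have hU1 : U * star U = 1 := mem_unitaryGroup_iff.mp hXh.eigenvectorUnitary.2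
  have hU2 : star U * U = 1 := mem_unitaryGroup_iff'.mp hXh.eigenvectorUnitary.2
  have hstar : star U = Uᵀ := by
    rw [Matrix.star_eq_conjTranspose, Matrix.conjTranspose_eq_transpose_of_trivial]
  have hspec : X = U * diagonal a * star U := by
    have := hXh.spectral_theorem
    simpa using this
  set Z : Matrix (Fin d) (Fin d) ℝ := star U * Y * U with hZdef
  have cancel : ∀ M : Matrix (Fin d) (Fin d) ℝ, star U * (U * M) = M := fun M => by
    rw [← Matrix.mul_assoc, hU2, Matrix.one_mul]
  have cancel' : ∀ M : Matrix (Fin d) (Fin d) ℝ, U * (star U * M) = M := fun M => by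
    rw [← Matrix.mul_assoc, hU1, Matrix.one_mul]
  have htr : ∀ M : Matrix (Fin d) (Fin d) ℝ, (U * M * star U).trace = M.trace := fun M => by
    rw [Matrix.trace_mul_cycle, hU2, Matrix.one_mul]
  have hYZ : Y = U * Z * star U := by
    rw [hZdef]
    simp only [Matrix.mul_assoc, cancel']
    rw [hU1, Matrix.mul_one]
  have hZsymm : Zᵀ = Z := by
    rw [hZdef, Matrix.transpose_mul, Matrix.transpose_mul, hstar, Matrix.transpose_transpose,
      hY.eq]
    simp only [Matrix.mul_assoc]
  set D : Matrix (Fin d) (Fin d) ℝ := diagonal a with hDdef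
  set A : Matrix (Fin d) (Fin d) ℝ := D * Z - Z * D with hAdef
  have hcomm : X * Y - Y * X = U * A * star U := by
    rw [hAdef]
    conv_lhs => rw [hspec, hYZ]
    simp only [Matrix.mul_sub, Matrix.sub_mul, Matrix.mul_assoc, cancel]
  have hAT : (X * Y - Y * X)ᵀ = U * Aᵀ * star U := by
    rw [hcomm, Matrix.transpose_mul, Matrix.transpose_mul, hstar, Matrix.transpose_transpose,
      Matrix.mul_assoc]
  have hmain : ((X * Y - Y * X)ᵀ * (X * Y - Y * X)).trace = (Aᵀ * A).trace := by
    rw [hAT, hcomm]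
    rw [show U * Aᵀ * star U * (U * A * star U) = U * (Aᵀ * A) * star U by
      simp only [Matrix.mul_assoc, cancel]]
    exact htr _
  have hXtr : ∑ i, a i ^ 2 = 1 := by
    rw [← hX2]
    rw [show X * X = U * (D * D) * star U by
      conv_lhs => rw [hspec]
      simp only [Matrix.mul_assoc, cancel]]
    rw [htr, hDdef, Matrix.diagonal_mul_diagonal, Matrix.trace_diagonal]
    exact Finset.sum_congr rfl fun i _ => sq (a i)
  have hYtr : ∑ i, ∑ j, Z i j ^ 2 = 1 := by
    rw [← hY2]
    rw [show Y * Y = U * (Z * Z) * star U by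
      conv_lhs => rw [hYZ]
      simp only [Matrix.mul_assoc, cancel]]
    rw [htr]
    simp only [Matrix.trace, Matrix.diag, Matrix.mul_apply]
    refine Finset.sum_congr rfl fun i _ => Finset.sum_congr rfl fun j _ => ?_
    have : Z j i = Z i j := congrFun (congrFun hZsymm i) j
    rw [sq, this]
  have hentry : ∀ i j, A i j = (a i - a j) * Z i j := by
    intro i j
    rw [hAdef]
    simp [hDdef, Matrix.sub_apply, Matrix.diagonal_mul, Matrix.mul_diagonal]
    ring
  rw [hmain]
  have : (Aᵀ * A).trace = ∑ i, ∑ j, ((a i - a j) * Z i j) ^ 2 := by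
    simp only [Matrix.trace, Matrix.diag, Matrix.mul_apply, Matrix.transpose_apply]
    rw [Finset.sum_comm]
    refine Finset.sum_congr rfl fun i _ => Finset.sum_congr rfl fun j _ => ?_
    rw [hentry, sq]
  rw [this]
  exact sum_aux a (fun i j => Z i j) hXtr hYtr

end

open Matrix in
/-- For symmetric `d × d` real matrices with `Tr(X²) = Tr(Y²) = 1`, the commutator
`[X,Y] = XY - YX` satisfies `Tr([X,Y]ᵀ[X,Y]) ≤ 2`, and consequently
`2 Tr(X²Y²) - 2 Tr((XY)²) ≤ 2`. -/
theorem stmt1 {d : ℕ} (hd : 1 ≤ d) (X Y : Matrix (Fin d) (Fin d) ℝ)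
    (hX : X.IsSymm) (hY : Y.IsSymm)
    (hX2 : (X * X).trace = 1) (hY2 : (Y * Y).trace = 1) :
    ((X * Y - Y * X)ᵀ * (X * Y - Y * X)).trace ≤ 2 ∧
    2 * (X * X * (Y * Y)).trace - 2 * ((X * Y) * (X * Y)).trace ≤ 2 := by
  have h1 := comm_bound X Y hX hY hX2 hY2
  have cyc : ∀ A B : Matrix (Fin d) (Fin d) ℝ, (A * B).trace = (B * A).trace :=
    Matrix.trace_mul_comm
  have t0 : (Y * (Y * (X * X))).trace = (X * (X * (Y * Y))).trace := by
    rw [cyc Y (Y * (X * X)), Matrix.mul_assoc, cyc Y ((X * X) * Y), Matrix.mul_assoc]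
    simp only [Matrix.mul_assoc]
  have t1 : ((Y * X) * (X * Y)).trace = ((X * X) * (Y * Y)).trace := by
    rw [cyc, Matrix.mul_assoc, cyc]
    simp only [Matrix.mul_assoc]
    exact t0
  have t2 : ((Y * X) * (Y * X)).trace = ((X * Y) * (X * Y)).trace := by
    rw [Matrix.mul_assoc, cyc]
    simp only [Matrix.mul_assoc]
  have t3 : ((X * Y) * (Y * X)).trace = ((X * X) * (Y * Y)).trace := by
    rw [Matrix.mul_assoc, cyc]
    simp only [Matrix.mul_assoc]
    exact t0
  have hid : ((X * Y - Y * X)ᵀ * (X * Y - Y * X)).trace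
      = 2 * (X * X * (Y * Y)).trace - 2 * ((X * Y) * (X * Y)).trace := by
    have hT : (X * Y - Y * X)ᵀ = Y * X - X * Y := by
      rw [Matrix.transpose_sub, Matrix.transpose_mul, Matrix.transpose_mul, hX.eq, hY.eq]
    rw [hT]
    simp only [Matrix.sub_mul, Matrix.mul_sub, Matrix.trace_sub]
    linarith [t1, t2, t3]
  exact ⟨h1, by linarith [hid ▸ h1]⟩
end

section
/- Let X be a real d × d diagonal matrix with Tr(X²) = 1 and let Y be a real d × d symmetric matrix with Tr(Y²) = 1 whose diagonal entries are all zero. Then Tr(X²Y²) ≤ 1/2 and Tr((XY)²) ≥ −1/2. -/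
/-- If `X` is diagonal with `Tr(X²) = 1` and `Y` is symmetric with zero diagonal and
`Tr(Y²) = 1`, then `Tr(X²Y²) ≤ 1/2` and `Tr((XY)²) ≥ -1/2`. -/
theorem stmt2 {d : ℕ} (hd : 1 ≤ d) (X Y : Matrix (Fin d) (Fin d) ℝ)
    (hXdiag : X.IsDiag) (hYsymm : Y.IsSymm) (hYdiag : ∀ i, Y i i = 0)
    (hX2 : (X * X).trace = 1) (hY2 : (Y * Y).trace = 1) :
    (X * X * (Y * Y)).trace ≤ 1/2 ∧ (-(1/2) : ℝ) ≤ ((X * Y) * (X * Y)).trace := by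
  set x : Fin d → ℝ := fun i => X i i with hxdef
  have hXoff : ∀ i j, i ≠ j → X i j = 0 := fun i j h => hXdiag h
  have hYsym : ∀ i j, Y j i = Y i j := fun i j => hYsymm.apply i j
  -- Σ x_i² = 1
  have hsx : ∑ i, x i ^ 2 = 1 := by
    have h := hX2
    rw [Matrix.trace] at h
    simp only [Matrix.diag_apply, Matrix.mul_apply] at h
    rw [← h]
    apply Finset.sum_congr rfl
    intro i _
    rw [Finset.sum_eq_single i]
    · ring
    · intro j _ hj; rw [hXoff i j (Ne.symm hj)]; ring
    · intro h; exact absurd (Finset.mem_univ i) h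
  -- Σ Σ Y_{ij}² = 1
  have hsy : ∑ i, ∑ j, Y i j ^ 2 = 1 := by
    have h := hY2
    rw [Matrix.trace] at h
    simp only [Matrix.diag_apply, Matrix.mul_apply] at h
    rw [← h]
    apply Finset.sum_congr rfl
    intro i _
    apply Finset.sum_congr rfl
    intro j _
    rw [hYsym i j]; ring
  -- x_i² + x_j² ≤ 1 for i ≠ j
  have hpair : ∀ i j : Fin d, i ≠ j → x i ^ 2 + x j ^ 2 ≤ 1 := by
    intro i j hij
    rw [← hsx]
    have : x i ^ 2 + x j ^ 2 = ∑ k ∈ ({i, j} : Finset (Fin d)), x k ^ 2 := by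
      rw [Finset.sum_pair hij]
    rw [this]
    apply Finset.sum_le_sum_of_subset_of_nonneg (Finset.subset_univ _)
    intro k _ _
    positivity
  -- symmetric double sum identity
  have hswap : ∑ i, ∑ j, x j ^ 2 * Y i j ^ 2 = ∑ i, ∑ j, x i ^ 2 * Y i j ^ 2 := by
    rw [Finset.sum_comm]
    apply Finset.sum_congr rfl
    intro i _
    apply Finset.sum_congr rfl
    intro j _
    rw [hYsym i j]
  have h2 : 2 * (∑ i, ∑ j, x i ^ 2 * Y i j ^ 2)
      = ∑ i, ∑ j, (x i ^ 2 + x j ^ 2) * Y i j ^ 2 := by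
    rw [two_mul]
    nth_rewrite 2 [← hswap]
    rw [← Finset.sum_add_distrib]
    apply Finset.sum_congr rfl
    intro i _
    rw [← Finset.sum_add_distrib]
    apply Finset.sum_congr rfl
    intro j _
    ring
  have hkey : ∑ i, ∑ j, x i ^ 2 * Y i j ^ 2 ≤ 1 / 2 := by
    have hb : ∑ i, ∑ j, (x i ^ 2 + x j ^ 2) * Y i j ^ 2 ≤ ∑ i, ∑ j, Y i j ^ 2 := by
      apply Finset.sum_le_sum
      intro i _
      apply Finset.sum_le_sum
      intro j _
      by_cases hij : i = j
      · subst hij; rw [hYdiag i]; simp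
      · calc (x i ^ 2 + x j ^ 2) * Y i j ^ 2 ≤ 1 * Y i j ^ 2 := by
              apply mul_le_mul_of_nonneg_right (hpair i j hij) (by positivity)
          _ = Y i j ^ 2 := one_mul _
    linarith [h2, hsy, hb]
  have hXY : ∀ i k, (X * Y) i k = x i * Y i k := by
    intro i k
    rw [Matrix.mul_apply, Finset.sum_eq_single_of_mem i (Finset.mem_univ i)]
    intro j _ hj; rw [hXoff i j (Ne.symm hj)]; ring
  have hXX : ∀ i k, (X * X) i k = if i = k then x i ^ 2 else 0 := by
    intro i k
    rw [Matrix.mul_apply, Finset.sum_eq_single_of_mem i (Finset.mem_univ i)]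
    · by_cases h : i = k
      · subst h; simp [pow_two, hxdef]
      · rw [hXoff i k h, if_neg h]; ring
    · intro j _ hj; rw [hXoff i j (Ne.symm hj)]; ring
  constructor
  · have htr : (X * X * (Y * Y)).trace = ∑ i, ∑ j, x i ^ 2 * Y i j ^ 2 := by
      rw [Matrix.trace]
      simp only [Matrix.diag_apply]
      apply Finset.sum_congr rfl
      intro i _
      rw [Matrix.mul_apply, Finset.sum_eq_single_of_mem i (Finset.mem_univ i)]
      · rw [hXX, if_pos rfl, Matrix.mul_apply, Finset.mul_sum]
        apply Finset.sum_congr rfl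
        intro j _
        rw [hYsym i j]; ring
      · intro k _ hk
        rw [hXX, if_neg (Ne.symm hk)]; ring
    rw [htr]; exact hkey
  · have htr : ((X * Y) * (X * Y)).trace = ∑ i, ∑ j, x i * x j * Y i j ^ 2 := by
      rw [Matrix.trace]
      simp only [Matrix.diag_apply]
      apply Finset.sum_congr rfl
      intro i _
      rw [Matrix.mul_apply]
      apply Finset.sum_congr rfl
      intro j _
      rw [hXY i j, hXY j i, hYsym i j]
      ring
    rw [htr]
    have hb : ∑ i, ∑ j, -((x i ^ 2 + x j ^ 2) / 2 * Y i j ^ 2)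
        ≤ ∑ i, ∑ j, x i * x j * Y i j ^ 2 := by
      apply Finset.sum_le_sum
      intro i _
      apply Finset.sum_le_sum
      intro j _
      have h1 : 0 ≤ Y i j ^ 2 := by positivity
      nlinarith [sq_nonneg (x i + x j), sq_nonneg (x i - x j)]
    have heq : ∑ i, ∑ j, -((x i ^ 2 + x j ^ 2) / 2 * Y i j ^ 2)
        = -(1 / 2 * ∑ i, ∑ j, (x i ^ 2 + x j ^ 2) * Y i j ^ 2) := by
      rw [Finset.mul_sum, ← Finset.sum_neg_distrib]
      apply Finset.sum_congr rfl
      intro i _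
      rw [Finset.mul_sum, ← Finset.sum_neg_distrib]
      apply Finset.sum_congr rfl
      intro j _
      ring
    rw [heq] at hb
    linarith [h2, hkey]
end

section
/- Let V be a finite-dimensional real inner product space, f : V → ℝ twice continuously differentiable with ‖∇²f(s) − ∇²f(0)‖ ≤ ρ̂‖s‖ for all s in the ball of radius 3R about the origin. Let θ ∈ [0,1] and suppose s_{k−2}, s_{k−1}, s_k all have norm at most R. With u_j = (2−θ)s_j − (1−θ)s_{j−1} and δ_j = ∇f(u_j) − ∇f(0) − ∇²f(0)[u_j], it holds that ‖δ_k − δ_{k−1}‖ ≤ 6 ρ̂ R (‖s_k − s_{k−1}‖ + ‖s_{k−1} − s_{k−2}‖). -/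
/-- If the Hessian of `f` satisfies `‖∇²f(s) - ∇²f(0)‖ ≤ ρ̂‖s‖` on the ball of
radius `3R` and `‖s_{k-2}‖, ‖s_{k-1}‖, ‖s_k‖ ≤ R`, then with
`u_j = (2-θ)s_j - (1-θ)s_{j-1}` and `δ_j = ∇f(u_j) - ∇f(0) - ∇²f(0)[u_j]`, one has
`‖δ_k - δ_{k-1}‖ ≤ 6 ρ̂ R (‖s_k - s_{k-1}‖ + ‖s_{k-1} - s_{k-2}‖)`. -/
theorem stmt14 {V : Type*} [NormedAddCommGroup V] [InnerProductSpace ℝ V]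
    [FiniteDimensional ℝ V]
    (f : V → ℝ) (hf : ContDiff ℝ 2 f) (ρ R : ℝ) (hρ : 0 < ρ) (hR : 0 < R)
    (hHess : ∀ s : V, ‖s‖ ≤ 3 * R →
      ‖fderiv ℝ (gradient f) s - fderiv ℝ (gradient f) 0‖ ≤ ρ * ‖s‖)
    (θ : ℝ) (hθ0 : 0 ≤ θ) (hθ1 : θ ≤ 1)
    (skmm skm sk : V) (hskmm : ‖skmm‖ ≤ R) (hskm : ‖skm‖ ≤ R) (hsk : ‖sk‖ ≤ R) :
    ‖(gradient f ((2 - θ) • sk - (1 - θ) • skm) - gradient f 0 -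
        fderiv ℝ (gradient f) 0 ((2 - θ) • sk - (1 - θ) • skm)) -
      (gradient f ((2 - θ) • skm - (1 - θ) • skmm) - gradient f 0 -
        fderiv ℝ (gradient f) 0 ((2 - θ) • skm - (1 - θ) • skmm))‖ ≤
      6 * ρ * R * (‖sk - skm‖ + ‖skm - skmm‖) := by
  -- gradient f is C¹
  have hgrad : ContDiff ℝ 1 (gradient f) := by
    have h1 : ContDiff ℝ 1 (fderiv ℝ f) := hf.fderiv_right (by norm_num)
    exact (InnerProductSpace.toDual ℝ V).symm.contDiff.comp h1
  have hdiff : Differentiable ℝ (gradient f) := hgrad.differentiable one_ne_zero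
  set H0 := fderiv ℝ (gradient f) 0 with hH0
  set g : V → V := fun u => gradient f u - gradient f 0 - H0 u with hg
  set uk := (2 - θ) • sk - (1 - θ) • skm with huk
  set ukm := (2 - θ) • skm - (1 - θ) • skmm with hukm
  have hball : ∀ a b : V, ‖a‖ ≤ R → ‖b‖ ≤ R → ‖(2 - θ) • a - (1 - θ) • b‖ ≤ 3 * R := by
    intro a b ha hb
    calc ‖(2 - θ) • a - (1 - θ) • b‖ ≤ ‖(2 - θ) • a‖ + ‖(1 - θ) • b‖ := norm_sub_le _ _
      _ = |2 - θ| * ‖a‖ + |1 - θ| * ‖b‖ := by rw [norm_smul, norm_smul]; rfl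
      _ ≤ 2 * R + 1 * R := by
          have h2 : |2 - θ| ≤ 2 := by rw [abs_le]; constructor <;> linarith
          have h1 : |1 - θ| ≤ 1 := by rw [abs_le]; constructor <;> linarith
          have hna : 0 ≤ ‖a‖ := norm_nonneg a
          have hnb : 0 ≤ ‖b‖ := norm_nonneg b
          gcongr
      _ = 3 * R := by ring
  have hukmem : uk ∈ Metric.closedBall (0 : V) (3 * R) := by
    simpa [Metric.mem_closedBall, dist_eq_norm] using hball sk skm hsk hskm
  have hukmmem : ukm ∈ Metric.closedBall (0 : V) (3 * R) := by
    simpa [Metric.mem_closedBall, dist_eq_norm] using hball skm skmm hskm hskmm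
  -- MVT bound on g
  have hmvt : ‖g uk - g ukm‖ ≤ 3 * ρ * R * ‖uk - ukm‖ := by
    apply (convex_closedBall (0 : V) (3 * R)).norm_image_sub_le_of_norm_hasFDerivWithin_le
      (f' := fun u => fderiv ℝ (gradient f) u - H0)
      (fun x _ => ?_) (fun x hx => ?_) hukmmem hukmem
    · exact (((hdiff x).hasFDerivAt.sub_const (gradient f 0)).sub
        H0.hasFDerivAt).hasFDerivWithinAt
    · have hx' : ‖x‖ ≤ 3 * R := by
        simpa [Metric.mem_closedBall, dist_eq_norm] using hx
      calc ‖fderiv ℝ (gradient f) x - H0‖ ≤ ρ * ‖x‖ := hHess x hx'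
        _ ≤ ρ * (3 * R) := by gcongr
        _ = 3 * ρ * R := by ring
  have hdiffu : ‖uk - ukm‖ ≤ 2 * (‖sk - skm‖ + ‖skm - skmm‖) := by
    have heq : uk - ukm = (2 - θ) • (sk - skm) - (1 - θ) • (skm - skmm) := by
      simp only [huk, hukm, smul_sub]; abel
    rw [heq]
    calc ‖(2 - θ) • (sk - skm) - (1 - θ) • (skm - skmm)‖
        ≤ ‖(2 - θ) • (sk - skm)‖ + ‖(1 - θ) • (skm - skmm)‖ := norm_sub_le _ _
      _ = |2 - θ| * ‖sk - skm‖ + |1 - θ| * ‖skm - skmm‖ := by rw [norm_smul, norm_smul]; rfl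
      _ ≤ 2 * ‖sk - skm‖ + 2 * ‖skm - skmm‖ := by
          have h2 : |2 - θ| ≤ 2 := by rw [abs_le]; constructor <;> linarith
          have h1 : |1 - θ| ≤ 2 := by rw [abs_le]; constructor <;> linarith
          gcongr
      _ = 2 * (‖sk - skm‖ + ‖skm - skmm‖) := by ring
  calc ‖g uk - g ukm‖ ≤ 3 * ρ * R * ‖uk - ukm‖ := hmvt
    _ ≤ 3 * ρ * R * (2 * (‖sk - skm‖ + ‖skm - skmm‖)) := by
        have : (0:ℝ) ≤ 3 * ρ * R := by positivity
        exact mul_le_mul_of_nonneg_left hdiffu this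
    _ = 6 * ρ * R * (‖sk - skm‖ + ‖skm - skmm‖) := by ring
end

section
/- Let M be the unit sphere in ℝⁿ (n ≥ 2) with the induced Riemannian metric, let x ∈ M, s ∈ T_xM nonzero, and ṡ ∈ T_xM with orthogonal decomposition ṡ = ṡ_∥ + ṡ_⊥ where ṡ_∥ = (⟨ṡ,s⟩/⟨s,s⟩)s. The curve c(t) = Exp_x(s + t ṡ) has initial intrinsic acceleration c''(0) = ((‖s‖ − sin‖s‖ cos‖s‖)/‖s‖³) ‖ṡ_⊥‖² P_s(s) − 2((sin‖s‖ − ‖s‖cos‖s‖)/‖s‖³) ⟨s, ṡ⟩ ṡ_⊥, where P_s denotes parallel transport along the geodesic t ↦ Exp_x(ts) from 0 to 1. Consequently ‖c''(0)‖ ≤ (2/3)‖s‖ ‖ṡ‖ ‖ṡ_⊥‖. -/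
open Real
open scoped RealInnerProductSpace

lemma aux_nonneg {f f' : ℝ → ℝ} (hd : ∀ t, HasDerivAt f (f' t) t)
    (h0 : f 0 = 0) (hpos : ∀ t, 0 ≤ t → 0 ≤ f' t) : ∀ t, 0 ≤ t → 0 ≤ f t := by
  intro t ht
  have hmono : MonotoneOn f (Set.Ici (0:ℝ)) := by
    apply monotoneOn_of_deriv_nonneg (convex_Ici 0)
    · exact fun y _ => ((hd y).continuousAt.continuousWithinAt)
    · exact fun y _ => ((hd y).differentiableAt.differentiableWithinAt)
    · intro y hy
      rw [(hd y).deriv]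
      exact hpos y (le_of_lt (by simpa using hy))
  have := hmono (Set.self_mem_Ici) (Set.mem_Ici.2 ht) ht
  linarith [h0 ▸ this]

set_option maxHeartbeats 1000000

/-- `u - sin u ≤ u^3/6` for `u ≥ 0`. -/
lemma aux_sub_sin (u : ℝ) (hu : 0 ≤ u) : u - Real.sin u ≤ u^3/6 := by
  have h := aux_nonneg (f := fun t => Real.sin t - t + t^3/6)
    (f' := fun t => Real.cos t - 1 + t^2/2)
    (fun t => by
      have h1 : HasDerivAt Real.sin (Real.cos t) t := Real.hasDerivAt_sin t
      have h2 : HasDerivAt (fun t : ℝ => t) 1 t := hasDerivAt_id t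
      have h3 : HasDerivAt (fun t : ℝ => t^3/6) (3*t^2/6) t := by
        simpa using ((hasDerivAt_pow 3 t).div_const 6)
      exact ((h1.sub h2).add h3).congr_deriv (by ring))
    (by norm_num)
    (fun t _ => by nlinarith [Real.one_sub_sq_div_two_le_cos (x := t)])
  nlinarith [h u hu]

/-- `sin u - u cos u ≤ u^3/3` for `u ≥ 0`. -/
lemma aux_sincos_upper (u : ℝ) (hu : 0 ≤ u) : Real.sin u - u * Real.cos u ≤ u^3/3 := by
  have h := aux_nonneg (f := fun t => t^3/3 - Real.sin t + t * Real.cos t)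
    (f' := fun t => t^2 - t * Real.sin t)
    (fun t => by
      have h3 : HasDerivAt (fun t : ℝ => t^3/3) (3*t^2/3) t := by
        simpa using ((hasDerivAt_pow 3 t).div_const 3)
      have h1 : HasDerivAt Real.sin (Real.cos t) t := Real.hasDerivAt_sin t
      have h2 : HasDerivAt (fun t : ℝ => t * Real.cos t)
          (1 * Real.cos t + t * (-Real.sin t)) t :=
        (hasDerivAt_id t).mul (Real.hasDerivAt_cos t)
      exact ((h3.sub h1).add h2).congr_deriv (by ring))
    (by norm_num)
    (fun t ht => by nlinarith [Real.sin_le ht])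
  nlinarith [h u hu]

/-- `-(u^3/3) ≤ sin u - u cos u` for `u ≥ 0`. -/
lemma aux_sincos_lower (u : ℝ) (hu : 0 ≤ u) : -(u^3/3) ≤ Real.sin u - u * Real.cos u := by
  have h := aux_nonneg (f := fun t => Real.sin t - t * Real.cos t + t^3/3)
    (f' := fun t => t * Real.sin t + t^2)
    (fun t => by
      have h3 : HasDerivAt (fun t : ℝ => t^3/3) (3*t^2/3) t := by
        simpa using ((hasDerivAt_pow 3 t).div_const 3)
      have h1 : HasDerivAt Real.sin (Real.cos t) t := Real.hasDerivAt_sin t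
      have h2 : HasDerivAt (fun t : ℝ => t * Real.cos t)
          (1 * Real.cos t + t * (-Real.sin t)) t :=
        (hasDerivAt_id t).mul (Real.hasDerivAt_cos t)
      exact ((h1.sub h2).add h3).congr_deriv (by ring))
    (by norm_num)
    (fun t ht => by
      rcases le_or_gt t 1 with h1 | h1
      · have : 0 ≤ Real.sin t := Real.sin_nonneg_of_nonneg_of_le_pi ht (by
          have := Real.pi_gt_three; linarith)
        nlinarith
      · nlinarith [Real.neg_one_le_sin t])
    u hu
  linarith

lemma coeff1 (ρ A B S C a b e2 U : ℝ) (hρ : ρ ≠ 0) (hpy : S^2 + C^2 = 1)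
    (ha : a = A/ρ) (hb : b = (B*ρ - A*a)/ρ^2)
    (he2 : e2 = ((-S*a*ρ + C*a - C*a)*ρ^2 - (C*ρ - S)*((2:ℕ)*ρ^1*a))/((ρ^2)^2)*a
      + (C*ρ - S)/ρ^2*b)
    (hU : U = B - A^2/ρ^2) :
    (-(C*a)*a + -S*b) - ((-(C*a)*a + -S*b)*C + e2*(S*ρ)
      + ((C*ρ - S)/ρ^2*a + (1*((C*ρ - S)/ρ^2*a) + 0*e2))*(S/ρ*A))*C
    = -((ρ - S*C)/ρ^3*U*ρ*S) := by
  subst ha hb he2 hU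
  field_simp
  linear_combination (C * A^2 * ρ^4) * hpy

lemma coeff2 (ρ A B S C a b e2 U : ℝ) (hρ : ρ ≠ 0) (hpy : S^2 + C^2 = 1)
    (ha : a = A/ρ) (hb : b = (B*ρ - A*a)/ρ^2)
    (he2 : e2 = ((-S*a*ρ + C*a - C*a)*ρ^2 - (C*ρ - S)*((2:ℕ)*ρ^1*a))/((ρ^2)^2)*a
      + (C*ρ - S)/ρ^2*b)
    (hU : U = B - A^2/ρ^2) :
    e2 - ((-(C*a)*a + -S*b)*C + e2*(S*ρ)
      + ((C*ρ - S)/ρ^2*a + (1*((C*ρ - S)/ρ^2*a) + 0*e2))*(S/ρ*A))*(S/ρ)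
    = (ρ - S*C)/ρ^3*U*C + 2*((S - ρ*C)/ρ^3)*A*(A/ρ^2) := by
  subst ha hb he2 hU
  field_simp
  linear_combination (S*A^2*ρ^4 - S*A^2*ρ^2 + S*B*ρ^4) * hpy
/-- On the unit sphere `S^{n-1} ⊂ ℝⁿ` with `Exp_x(v) = cos(‖v‖)x + sin(‖v‖)v/‖v‖`,
for `x` on the sphere, a nonzero tangent vector `s` and a tangent vector `ṡ` with
orthogonal decomposition `ṡ = ṡ_∥ + ṡ_⊥`, the curve `c(t) = Exp_x(s + tṡ)` has
initial intrinsic acceleration (the tangential projection at `c(0)` of the ambient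
second derivative)
`c''(0) = ((‖s‖ - sin‖s‖cos‖s‖)/‖s‖³)‖ṡ_⊥‖² P_s(s)
          - 2((sin‖s‖ - ‖s‖cos‖s‖)/‖s‖³)⟨s,ṡ⟩ ṡ_⊥`,
where `P_s(s) = cos(‖s‖)s - ‖s‖sin(‖s‖)x` is the parallel transport of `s` along the
geodesic `t ↦ Exp_x(ts)`.  Consequently `‖c''(0)‖ ≤ (2/3)‖s‖‖ṡ‖‖ṡ_⊥‖`. -/
theorem stmt16 {n : ℕ} (hn : 2 ≤ n)
    (x s sd : EuclideanSpace ℝ (Fin n))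
    (hx : ‖x‖ = 1) (hxs : ⟪x, s⟫ = 0) (hs0 : s ≠ 0) (hxsd : ⟪x, sd⟫ = 0)
    (Exp : EuclideanSpace ℝ (Fin n) → EuclideanSpace ℝ (Fin n) →
      EuclideanSpace ℝ (Fin n))
    (hExp : ∀ p v, Exp p v = Real.cos ‖v‖ • p + (Real.sin ‖v‖ / ‖v‖) • v)
    (c : ℝ → EuclideanSpace ℝ (Fin n)) (hc : ∀ t, c t = Exp x (s + t • sd))
    (sperp : EuclideanSpace ℝ (Fin n))
    (hsperp : sperp = sd - (⟪s, sd⟫ / ⟪s, s⟫) • s)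
    (Ps : EuclideanSpace ℝ (Fin n))
    (hPs : Ps = Real.cos ‖s‖ • s - (‖s‖ * Real.sin ‖s‖) • x)
    (acc : EuclideanSpace ℝ (Fin n))
    (hacc : acc = deriv (deriv c) 0 - ⟪c 0, deriv (deriv c) 0⟫ • c 0) :
    acc = ((‖s‖ - Real.sin ‖s‖ * Real.cos ‖s‖) / ‖s‖ ^ 3 * ‖sperp‖ ^ 2) • Ps -
        (2 * ((Real.sin ‖s‖ - ‖s‖ * Real.cos ‖s‖) / ‖s‖ ^ 3) * ⟪s, sd⟫) • sperp ∧
      ‖acc‖ ≤ 2/3 * ‖s‖ * ‖sd‖ * ‖sperp‖ := by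
  have hρ : (0:ℝ) < ‖s‖ := norm_pos_iff.mpr hs0
  set ρ : ℝ := ‖s‖ with hρdef
  have hρne : ρ ≠ 0 := hρ.ne'
  set A : ℝ := ⟪s, sd⟫ with hA
  set B : ℝ := ‖sd‖^2 with hB
  have hss : (⟪s, s⟫ : ℝ) = ρ^2 := real_inner_self_eq_norm_sq s
  have hdd : (⟪sd, sd⟫ : ℝ) = B := real_inner_self_eq_norm_sq sd
  have hxx : (⟪x, x⟫ : ℝ) = 1 := by
    rw [real_inner_self_eq_norm_sq, hx]; norm_num
  have hsx : (⟪s, x⟫ : ℝ) = 0 := by rw [real_inner_comm]; exact hxs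
  have hds : (⟪sd, s⟫ : ℝ) = A := by rw [real_inner_comm]
  rw [hss] at hsperp
  set N : ℝ → ℝ := fun t => ρ^2 + 2*A*t + B*t^2 with hN
  have hNinner : ∀ t : ℝ, (⟪s + t • sd, s + t • sd⟫ : ℝ) = N t := by
    intro t
    simp only [hN]
    rw [real_inner_add_add_self, real_inner_smul_right, real_inner_smul_left,
      real_inner_smul_right, hss, hdd, ← hA]
    ring
  have hnormt : ∀ t : ℝ, ‖s + t • sd‖ = Real.sqrt (N t) := by
    intro t
    rw [← hNinner t, real_inner_self_eq_norm_sq, Real.sqrt_sq (norm_nonneg _)]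
  set r : ℝ → ℝ := fun t => Real.sqrt (N t) with hr
  have hN0 : N 0 = ρ^2 := by simp [hN]
  have hN0pos : 0 < N 0 := by rw [hN0]; positivity
  have hr0 : r 0 = ρ := by simp only [hr, hN0]; exact Real.sqrt_sq hρ.le
  have hcfun : c = fun t => Real.cos (r t) • x +
      ((Real.sin (r t) / r t) • s + (t * (Real.sin (r t) / r t)) • sd) := by
    funext t
    simp only [hr]
    rw [hc, hExp, hnormt, smul_add, smul_smul,
      mul_comm (Real.sin (Real.sqrt (N t)) / Real.sqrt (N t)) t]
  set rd : ℝ → ℝ := fun t => (A + B*t) / r t with hrd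
  set g : ℝ → ℝ := fun t =>
      ((Real.cos (r t) * r t - Real.sin (r t)) / (r t)^2) * rd t with hg
  set D : ℝ → EuclideanSpace ℝ (Fin n) := fun t =>
      (-Real.sin (r t) * rd t) • x +
      ((g t) • s + (Real.sin (r t) / r t + t * g t) • sd) with hD
  have hNder : ∀ t : ℝ, HasDerivAt N (2*A + 2*B*t) t := by
    intro t
    have h2 : HasDerivAt (fun u : ℝ => 2*A*u) (2*A*1) t :=
      (hasDerivAt_id t).const_mul (2*A)
    have h3 : HasDerivAt (fun u : ℝ => B*u^2) (B*(2*t)) t := by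
      have := (hasDerivAt_pow 2 t).const_mul B
      simpa using this
    have h := ((hasDerivAt_const t (ρ^2)).add h2).add h3
    simp only [hN]
    refine h.congr_deriv ?_
    ring
  have hrder : ∀ t : ℝ, 0 < N t → HasDerivAt r (rd t) t := by
    intro t ht
    have hs' : Real.sqrt (N t) ≠ 0 := (Real.sqrt_pos.mpr ht).ne'
    have h := (hNder t).sqrt ht.ne'
    simp only [hrd, hr]
    convert h using 1
    field_simp
  have hψder : ∀ t : ℝ, 0 < N t →
      HasDerivAt (fun u => Real.sin (r u) / r u) (g t) t := by
    intro t ht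
    have hrpos : 0 < r t := by simp only [hr]; exact Real.sqrt_pos.mpr ht
    have h := ((hrder t ht).sin).div (hrder t ht) hrpos.ne'
    simp only [hg]
    refine h.congr_deriv ?_
    ring
  have hDer : ∀ t : ℝ, 0 < N t → HasDerivAt c (D t) t := by
    intro t ht
    have hχ : HasDerivAt (fun u => u * (Real.sin (r u) / r u))
        (1 * (Real.sin (r t) / r t) + t * g t) t :=
      (hasDerivAt_id t).mul (hψder t ht)
    have h := (((hrder t ht).cos).smul_const x).add
      (((hψder t ht).smul_const s).add (hχ.smul_const sd))
    rw [hcfun]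
    simp only [hD]
    simp only [one_mul] at h
    exact h
  have hNcont : Continuous N := by simp only [hN]; fun_prop
  have hev : ∀ᶠ t in nhds (0:ℝ), 0 < N t :=
    (hNcont.continuousAt).eventually (eventually_gt_nhds hN0pos)
  have hdc : deriv c =ᶠ[nhds (0:ℝ)] D := hev.mono fun t ht => (hDer t ht).deriv
  set a : ℝ := A/ρ with ha
  set b : ℝ := (B * ρ - A * a)/ρ^2 with hb
  have hrder0 : HasDerivAt r a 0 := by
    have h := hrder 0 hN0pos
    simp only [hrd, hr0, mul_zero, add_zero] at h
    rw [ha]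
    exact h
  have hrd0 : rd 0 = a := by simp only [hrd]; simp [hr0, ha]
  have hrdder : HasDerivAt rd b 0 := by
    have h1 : HasDerivAt (fun t : ℝ => A + B*t) (0 + B*1) 0 :=
      (hasDerivAt_const 0 A).add ((hasDerivAt_id 0).const_mul B)
    have h := h1.div (hrder 0 hN0pos) (by rw [hr0]; exact hρne)
    rw [hrd0, hr0] at h
    simp only [hrd]
    refine h.congr_deriv ?_
    rw [hb]; ring
  set e1 : ℝ := -(Real.cos ρ * a) * a + -Real.sin ρ * b with he1
  set e2 : ℝ := ((((-Real.sin ρ * a) * ρ + Real.cos ρ * a - Real.cos ρ * a) * ρ^2 -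
      (Real.cos ρ * ρ - Real.sin ρ) * ((2:ℕ) * ρ^1 * a)) / ((ρ^2)^2)) * a +
      ((Real.cos ρ * ρ - Real.sin ρ) / ρ^2) * b with he2
  have hg0 : g 0 = ((Real.cos ρ * ρ - Real.sin ρ) / ρ^2) * a := by
    simp only [hg, hr0, hrd0]
  set e3 : ℝ := ((Real.cos ρ * ρ - Real.sin ρ) / ρ^2) * a +
      (1 * (((Real.cos ρ * ρ - Real.sin ρ) / ρ^2) * a) + 0 * e2) with he3
  have hu1 : HasDerivAt (fun t => -Real.sin (r t) * rd t) e1 0 := by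
    have h := ((hrder0.sin).neg).mul hrdder
    rw [hr0, hrd0] at h
    rw [he1]
    refine h.congr_deriv ?_
    simp [hr0]
  have hu2 : HasDerivAt g e2 0 := by
    have hp : HasDerivAt (fun t => Real.cos (r t) * r t - Real.sin (r t))
        ((-Real.sin (r 0) * a) * r 0 + Real.cos (r 0) * a - Real.cos (r 0) * a) 0 :=
      ((hrder0.cos).mul hrder0).sub (hrder0.sin)
    have hq : HasDerivAt (fun t => (r t)^2) ((2:ℕ) * r 0 ^ 1 * a) 0 := hrder0.pow 2
    have hq0 : (r 0)^2 ≠ 0 := by rw [hr0]; positivity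
    have h := (hp.div hq hq0).mul hrdder
    rw [hr0, hrd0] at h
    simp only [hg, he2]
    refine h.congr_deriv ?_
    simp [hr0]
  have hu3 : HasDerivAt (fun t => Real.sin (r t) / r t + t * g t) e3 0 := by
    have h := (hψder 0 hN0pos).add ((hasDerivAt_id 0).mul hu2)
    rw [hg0] at h
    rw [he3]
    exact h
  have hDder : HasDerivAt D (e1 • x + (e2 • s + e3 • sd)) 0 := by
    have h := (hu1.smul_const x).add ((hu2.smul_const s).add (hu3.smul_const sd))
    simp only [hD]
    exact h
  have hEE : deriv (deriv c) 0 = e1 • x + (e2 • s + e3 • sd) := by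
    rw [hdc.deriv_eq, hDder.deriv]
  have hc0 : c 0 = Real.cos ρ • x + (Real.sin ρ / ρ) • s := by
    rw [hcfun]
    simp [hr0]
  set S : ℝ := Real.sin ρ with hS
  set C : ℝ := Real.cos ρ with hC
  have hpy : S^2 + C^2 = 1 := Real.sin_sq_add_cos_sq ρ
  set lam : ℝ := e1 * C + e2 * (S * ρ) + e3 * (S / ρ * A) with hlam
  have hip : (⟪c 0, deriv (deriv c) 0⟫ : ℝ) = lam := by
    rw [hc0, hEE, hlam]
    simp only [inner_add_left, inner_add_right, real_inner_smul_left,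
      real_inner_smul_right, hxx, hss, ← hA, hxs, hxsd, hsx]
    field_simp
    ring
  have hU : ‖sperp‖^2 = B - A^2/ρ^2 := by
    rw [hsperp, @norm_sub_sq_real, real_inner_smul_right, hds,
      norm_smul, ← hB, ← hρdef]
    rw [mul_pow, Real.norm_eq_abs, sq_abs]
    field_simp
    ring
  set U : ℝ := ‖sperp‖^2 with hUdef
  set α : ℝ := (ρ - S * C) / ρ ^ 3 * U with hα
  set β : ℝ := 2 * ((S - ρ * C) / ρ ^ 3) * A with hβ
  have h3 : e3 = -β := by
    rw [he3, hβ, ha]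
    field_simp
    ring
  have h1 : e1 - lam * C = -(α * ρ * S) := by
    rw [hlam, he1, he3, hα]
    exact coeff1 ρ A B S C a b e2 U hρne hpy ha hb he2 hU
  have h2 : e2 - lam * (S/ρ) = α * C + β * (A/ρ^2) := by
    rw [hlam, he1, he3, hα, hβ]
    exact coeff2 ρ A B S C a b e2 U hρne hpy ha hb he2 hU
  have hmain : acc = α • Ps - β • sperp := by
    rw [hacc, hip, hEE, hc0, hPs, hsperp]
    match_scalars
    · linear_combination h1
    · linear_combination h2
    · linear_combination h3
  refine ⟨hmain, ?_⟩
  have horth : (⟪Ps, sperp⟫ : ℝ) = 0 := by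
    rw [hPs, hsperp]
    simp only [inner_sub_left, inner_sub_right, real_inner_smul_left,
      real_inner_smul_right, hss, ← hA, hxs, hxsd, hsx]
    field_simp
    ring
  have hPsn : ‖Ps‖^2 = ρ^2 := by
    rw [hPs, @norm_sub_sq_real, real_inner_smul_right, real_inner_smul_left, hsx,
      norm_smul, norm_smul, ← hρdef, hx]
    rw [mul_pow, mul_pow, Real.norm_eq_abs, Real.norm_eq_abs, sq_abs, sq_abs]
    linear_combination ρ^2 * hpy
  have haccsq : ‖acc‖^2 = α^2*ρ^2 + β^2*U := by
    rw [hmain, @norm_sub_sq_real, real_inner_smul_left, real_inner_smul_right,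
      horth, norm_smul, norm_smul, mul_pow, mul_pow, Real.norm_eq_abs,
      Real.norm_eq_abs, sq_abs, sq_abs, hPsn, ← hUdef]
    ring
  have hsin2 : Real.sin (2*ρ) = 2*S*C := by
    rw [Real.sin_two_mul, hS, hC]
  have hc1a : 0 ≤ ρ - S*C := by
    have h := Real.sin_le (by positivity : (0:ℝ) ≤ 2*ρ)
    rw [hsin2] at h
    linarith only [h]
  have hc1b : ρ - S*C ≤ 2/3*ρ^3 := by
    have h := aux_sub_sin (2*ρ) (by positivity)
    rw [hsin2] at h
    have h8 : (2*ρ)^3 = 8*ρ^3 := by ring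
    linarith only [h, h8]
  have hc2a : S - ρ*C ≤ ρ^3/3 := by
    have h := aux_sincos_upper ρ hρ.le
    rw [← hS, ← hC] at h
    linarith only [h]
  have hc2b : -(ρ^3/3) ≤ S - ρ*C := by
    have h := aux_sincos_lower ρ hρ.le
    rw [← hS, ← hC] at h
    linarith only [h]
  have hUnn : 0 ≤ U := by rw [hUdef]; positivity
  have hBU : B * ρ^2 = U * ρ^2 + A^2 := by
    rw [hU]
    field_simp
    ring
  have hRnn : (0:ℝ) ≤ 2/3*ρ*‖sd‖*‖sperp‖ := by positivity
  have hsq : ‖acc‖^2 ≤ (2/3*ρ*‖sd‖*‖sperp‖)^2 := by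
    have hsd2 : ‖sd‖^2 = B := hB.symm
    have hsp2 : ‖sperp‖^2 = U := hUdef.symm
    rw [haccsq]
    have hexp : (2/3*ρ*‖sd‖*‖sperp‖)^2 = 4/9 * ρ^2 * B * U := by
      rw [show (2/3*ρ*‖sd‖*‖sperp‖)^2 = 4/9 * ρ^2 * ‖sd‖^2 * ‖sperp‖^2 by ring,
        hsd2, hsp2]
    rw [hexp, hα, hβ]
    have hρ3 : (0:ℝ) < ρ^3 := by positivity
    have k1 : (ρ - S*C)/ρ^3 ≤ 2/3 := by
      rw [div_le_iff₀ hρ3]; linarith only [hc1b]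
    have k1n : 0 ≤ (ρ - S*C)/ρ^3 := div_nonneg hc1a hρ3.le
    have k1sq : ((ρ - S*C)/ρ^3)^2 ≤ 4/9 := by
      calc ((ρ - S*C)/ρ^3)^2 ≤ (2/3)^2 := pow_le_pow_left₀ k1n k1 2
        _ = 4/9 := by norm_num
    have k2 : ((S - ρ*C)/ρ^3)^2 ≤ 1/9 := by
      rw [div_pow, div_le_iff₀ (by positivity : (0:ℝ) < (ρ^3)^2)]
      calc (S - ρ*C)^2 ≤ (ρ^3/3)^2 := sq_le_sq' hc2b hc2a
        _ = 1/9*(ρ^3)^2 := by ring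
    calc ((ρ - S * C) / ρ ^ 3 * U)^2 * ρ^2 + (2 * ((S - ρ * C) / ρ ^ 3) * A)^2 * U
        = ((ρ - S*C)/ρ^3)^2 * (U^2*ρ^2) + 4*((S - ρ*C)/ρ^3)^2 * (A^2*U) := by
          ring
      _ ≤ 4/9 * (U^2*ρ^2) + 4*(1/9) * (A^2*U) := by
          have t1 : 0 ≤ U^2*ρ^2 := by positivity
          have t2 : 0 ≤ A^2*U := mul_nonneg (sq_nonneg A) hUnn
          have m1 := mul_le_mul_of_nonneg_right k1sq t1
          have h4 : 4*((S - ρ*C)/ρ^3)^2 ≤ 4*(1/9) := by linarith only [k2]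
          have m2 := mul_le_mul_of_nonneg_right h4 t2
          linarith only [m1, m2]
      _ = 4/9 * (U * (U*ρ^2 + A^2)) := by ring
      _ = 4/9 * (U * (B*ρ^2)) := by rw [hBU]
      _ = 4/9 * ρ^2 * B * U := by ring
  calc ‖acc‖ = Real.sqrt (‖acc‖^2) := (Real.sqrt_sq (norm_nonneg _)).symm
    _ ≤ Real.sqrt ((2/3*ρ*‖sd‖*‖sperp‖)^2) := Real.sqrt_le_sqrt hsq
    _ = 2/3*ρ*‖sd‖*‖sperp‖ := Real.sqrt_sq hRnn
end
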